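/- In the setting of the minimization over H_{k,0}: let z ∈ {0,1}^n with treated set T of size m, l = min(n−k, m), and let J ⊆ T be any subset of size l with associated vector η (η_i = ∞ for i ∈ J, else 0). Writing r_1 < ... < r_m for the sorted treated ranks of y and letting r_{j_1} < ... < r_{j_{m−l}} be the sorted ranks of treated units outside J, the rank score statistic satisfies t(z, y − z∘η) = Σ_{i=1}^l φ(i) + Σ_{p=1}^{m−l} φ(r_{j_p} + l + p − j_p), and this is minimized (over choices of J) when J = I_k, the set of treated indices with the l largest ranks, because r_{j_p} + l + p − j_p ≥ r_p + l for every p. -/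

import Mathlib

open Finset

/-- Rank with the "first" method for ties, for extended-real outcome vectors. -/
noncomputable def rankE (n : ℕ) (v : Fin n → EReal) (i : Fin n) : ℕ :=
  (Finset.univ.filter fun j => v j < v i).card +
  (Finset.univ.filter fun j => v j = v i ∧ j ≤ i).card

variable {n : ℕ}

noncomputable def keyf (v : Fin n → EReal) (i : Fin n) : EReal ×ₗ (Fin n) := toLex (v i, i)

lemma keyf_inj (v : Fin n → EReal) : Function.Injective (keyf v) := by
  intro i j h
  have := congrArg (fun x => (ofLex x).2) h
  simpa [keyf] using this

lemma rankE_eq_card (v : Fin n → EReal) (i : Fin n) :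
    rankE n v i = (univ.filter fun j => keyf v j ≤ keyf v i).card := by
  have h : (univ.filter fun j => keyf v j ≤ keyf v i)
      = (univ.filter fun j => v j < v i) ∪ (univ.filter fun j => v j = v i ∧ j ≤ i) := by
    ext j
    simp [keyf, Prod.Lex.le_iff]
  have hd : Disjoint (univ.filter fun j => v j < v i)
      (univ.filter fun j => v j = v i ∧ j ≤ i) := by
    rw [Finset.disjoint_left]
    intro a ha hb
    simp only [mem_filter] at ha hb
    exact absurd hb.2.1 (ne_of_lt ha.2)
  rw [rankE, h, card_union_of_disjoint hd]

lemma rankE_le_iff (v : Fin n → EReal) (i j : Fin n) :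
    rankE n v i ≤ rankE n v j ↔ keyf v i ≤ keyf v j := by
  rw [rankE_eq_card, rankE_eq_card]
  constructor
  · intro h
    by_contra hc
    push_neg at hc
    have hlt : keyf v j < keyf v i := hc
    have hss : (univ.filter fun a => keyf v a ≤ keyf v j)
        ⊂ (univ.filter fun a => keyf v a ≤ keyf v i) := by
      constructor
      · exact filter_subset_filter _ (by intro a; exact fun ha => ha) |>.trans (by
          intro a ha
          simp only [mem_filter] at ha ⊢
          exact ⟨ha.1, ha.2.trans hlt.le⟩)
      · intro hsub
        have : i ∈ univ.filter fun a => keyf v a ≤ keyf v j := hsub (by simp)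
        simp only [mem_filter] at this
        exact absurd this.2 (not_le_of_gt hlt)
    exact absurd h (not_le_of_gt (card_lt_card hss))
  · intro h
    apply card_le_card
    intro a ha
    simp only [mem_filter] at ha ⊢
    exact ⟨ha.1, ha.2.trans h⟩

lemma rankE_inj (v : Fin n → EReal) : Function.Injective (rankE n v) := by
  intro i j h
  apply keyf_inj v
  exact le_antisymm ((rankE_le_iff v i j).1 h.le) ((rankE_le_iff v j i).1 h.ge)

lemma rankE_self (v : Fin n → EReal) (i : Fin n) :
    rankE n v i = (univ.filter fun j => rankE n v j ≤ rankE n v i).card := by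
  conv_lhs => rw [rankE_eq_card]
  congr 1
  apply filter_congr
  intro j _
  exact (rankE_le_iff v j i).symm

lemma countP_le_sorted (a : ℕ) :
    ∀ (t : List ℕ), t.Pairwise (· < ·) → a ∈ t →
      t.countP (fun x => decide (x ≤ a)) = t.idxOf a + 1 := by
  intro t
  induction t with
  | nil => intro _ h; simp at h
  | cons b u ih =>
    intro hsort hmem
    have hu : u.Pairwise (· < ·) := hsort.of_cons
    have hblt : ∀ x ∈ u, b < x := fun x hx => List.rel_of_pairwise_cons hsort hx
    rcases eq_or_ne a b with rfl | hne
    · rw [List.countP_cons, List.idxOf_cons_self]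
      have h0 : u.countP (fun x => decide (x ≤ a)) = 0 := by
        apply List.countP_eq_zero.2
        intro x hx
        simp only [decide_eq_true_eq]
        exact not_le_of_gt (hblt x hx)
      simp [h0]
    · have hau : a ∈ u := by
        rcases List.mem_cons.1 hmem with h | h
        · exact absurd h hne
        · exact h
      rw [List.countP_cons, List.idxOf_cons_ne _ (Ne.symm hne), ih hu hau]
      have : b ≤ a := (hblt a hau).le
      simp [this]

lemma sorted_gap (t : List ℕ) (hsort : t.Pairwise (· < ·)) :
    ∀ (d p : ℕ), p + d < t.length → t.getD p 0 + d ≤ t.getD (p + d) 0 := by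
  intro d
  induction d with
  | zero => intro p _; simp
  | succ e ih =>
    intro p hp
    have h1 : p + e < t.length := by omega
    have h2 := ih p h1
    have hlt : t.getD (p + e) 0 < t.getD (p + e + 1) 0 := by
      rw [List.getD_eq_getElem t 0 h1, List.getD_eq_getElem t 0 (by omega : p + e + 1 < t.length)]
      exact List.pairwise_iff_getElem.1 hsort _ _ h1 (by omega) (by omega)
    have : p + (e + 1) = p + e + 1 := by omega
    rw [this]
    omega

lemma list_sum_range (t : List ℕ) (g : ℕ → ℝ) :
    (t.map g).sum = ∑ p ∈ Finset.range t.length, g (t.getD p 0) := by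
  induction t with
  | nil => simp
  | cons b u ih =>
    rw [List.map_cons, List.sum_cons, ih, List.length_cons, Finset.sum_range_succ']
    simp
    ring

lemma card_filter_le_eq (A : Finset ℕ) (a : ℕ) (ha : a ∈ A) :
    (A.filter (· ≤ a)).card = (A.sort (· ≤ ·)).idxOf a + 1 := by
  set t := A.sort (· ≤ ·) with ht
  have hnodup : t.Nodup := Finset.sort_nodup _ _
  have hAfilter : A.filter (· ≤ a) = (t.filter (fun x => decide (x ≤ a))).toFinset := by
    rw [List.toFinset_filter]
    rw [ht, Finset.sort_toFinset]
    ext x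
    simp
  rw [hAfilter, List.card_toFinset, (hnodup.filter _).dedup,
    ← List.countP_eq_length_filter]
  exact countP_le_sorted a t ((List.sortedLT_iff_pairwise.1 (Finset.sortedLT_sort A))) ((Finset.mem_sort ..).2 ha)

lemma indexOf_getD {t : List ℕ} (hnodup : t.Nodup) {p : ℕ} (hp : p < t.length) :
    t.idxOf (t.getD p 0) = p := by
  rw [List.getD_eq_getElem t 0 hp]
  have hmem : t[p] ∈ t := List.getElem_mem hp
  have hlt : t.idxOf t[p] < t.length := List.idxOf_lt_length_iff.2 hmem
  have : t[t.idxOf t[p]] = t[p] := List.getElem_idxOf hlt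
  exact hnodup.getElem_inj_iff.1 this


/-- for any subset `J` of the treated units of size `l = min(n−k, m)`,
sending the outcomes of `J` to `−∞` yields the rank score statistic value
`Σ_{i=1}^l φ(i) + Σ_{p=1}^{m−l} φ(r_{j_p} + l + p − j_p)`, pointwise each term dominates
the corresponding term `φ(r_p + l)` obtained with `J = I_k` (the treated units of the
`l` largest ranks), and hence the statistic is minimized at `J = I_k`. -/
theorem stmt13 (n k l : ℕ) (T : Finset (Fin n)) (y : Fin n → ℝ)
    (hl : l = min (n - k) T.card)
    (J : Finset (Fin n)) (hJT : J ⊆ T) (hJcard : J.card = l)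
    (φ : ℕ → ℝ) (hφ : Monotone φ) :
    -- `s` is the sorted list of treated ranks of `y`, `sOut` that of `T \ J`.
    (∀ s sOut : List ℕ,
      s = Finset.sort (T.image (rankE n (fun i => ((y i : EReal))))) (· ≤ ·) →
      sOut = Finset.sort ((T \ J).image (rankE n (fun i => ((y i : EReal))))) (· ≤ ·) →
      ((∑ i ∈ T, φ (rankE n (fun j => if j ∈ J then (⊥ : EReal) else (y j : EReal)) i))
          = (∑ i ∈ Finset.Icc 1 l, φ i)
            + ∑ p ∈ Finset.range (T.card - l),
                φ (sOut.getD p 0 + l + (p + 1) - (s.idxOf (sOut.getD p 0) + 1))) ∧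
      (∀ p < T.card - l,
        s.getD p 0 + l
          ≤ sOut.getD p 0 + l + (p + 1) - (s.idxOf (sOut.getD p 0) + 1)) ∧
      ((∑ i ∈ Finset.Icc 1 l, φ i) + (∑ p ∈ Finset.range (T.card - l), φ (s.getD p 0 + l))
          ≤ ∑ i ∈ T, φ (rankE n (fun j => if j ∈ J then (⊥ : EReal) else (y j : EReal)) i))) := by
  intro s sOut hs hsOut
  classical
  set v : Fin n → EReal := fun i => ((y i : EReal)) with hv
  set v' : Fin n → EReal := fun j => if j ∈ J then (⊥ : EReal) else (y j : EReal) with hv'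
  set rk : Fin n → ℕ := rankE n v with hrk
  have hrkinj : Function.Injective rk := rankE_inj v
  set R : Finset ℕ := T.image rk with hR
  set ROut : Finset ℕ := (T \ J).image rk with hROut
  have hlT : l ≤ T.card := hJcard ▸ card_le_card hJT
  have hslen : s.length = T.card := by
    rw [hs, Finset.length_sort, card_image_of_injective _ hrkinj]
  have hsOutlen : sOut.length = T.card - l := by
    rw [hsOut, Finset.length_sort, card_image_of_injective _ hrkinj, card_sdiff_of_subset hJT, hJcard]
  have hsub : ROut ⊆ R := image_subset_image (sdiff_subset)
  -- counting lemma
  have hcount : ∀ (A : Finset (Fin n)) (r : ℕ),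
      (A.filter fun j => rk j ≤ r).card = ((A.image rk).filter (· ≤ r)).card := by
    intro A r
    rw [Finset.filter_image]
    exact (card_image_of_injective _ hrkinj).symm
  -- ranks of the J part
  have hJrank : ∀ i ∈ J, rankE n v' i = (J.filter (· ≤ i)).card := by
    intro i hiJ
    have hv'i : v' i = ⊥ := if_pos hiJ
    have h1 : (univ.filter fun j => v' j < v' i) = ∅ := by
      rw [hv'i]
      apply filter_eq_empty_iff.2
      intro j _
      exact not_lt_bot
    have h2 : (univ.filter fun j => v' j = v' i ∧ j ≤ i) = J.filter (· ≤ i) := by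
      rw [hv'i]
      ext j
      by_cases hj : j ∈ J <;> simp [hv', hj]
    rw [rankE, h1, h2, card_empty, zero_add]
  -- sum over J
  have hJsum : ∑ i ∈ J, φ (rankE n v' i) = ∑ q ∈ Finset.Icc 1 l, φ q := by
    set f : Fin n → ℕ := fun i => (J.filter (· ≤ i)).card with hf
    have hmono : ∀ i ∈ J, ∀ i' ∈ J, i < i' → f i < f i' := by
      intro i hi i' hi' hlt
      apply card_lt_card
      constructor
      · intro a ha
        simp only [mem_filter] at ha ⊢
        exact ⟨ha.1, ha.2.trans hlt.le⟩
      · intro hsubst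
        have := hsubst (mem_filter.2 ⟨hi', le_refl i'⟩)
        simp only [mem_filter] at this
        exact absurd this.2 (not_le_of_gt hlt)
    have hinj : ∀ i ∈ J, ∀ i' ∈ J, f i = f i' → i = i' := by
      intro i hi i' hi' hfe
      rcases lt_trichotomy i i' with h | h | h
      · exact absurd hfe (Nat.ne_of_lt (hmono i hi i' hi' h))
      · exact h
      · exact absurd hfe.symm (Nat.ne_of_lt (hmono i' hi' i hi h))
    have him : J.image f = Finset.Icc 1 l := by
      apply Finset.eq_of_subset_of_card_le
      · intro q hq
        rcases mem_image.1 hq with ⟨i, hi, rfl⟩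
        rw [mem_Icc]
        constructor
        · exact card_pos.2 ⟨i, mem_filter.2 ⟨hi, le_refl i⟩⟩
        · calc f i ≤ J.card := card_le_card (filter_subset _ _)
            _ = l := hJcard
      · rw [card_image_of_injOn hinj, hJcard, Nat.card_Icc]
        omega
    calc ∑ i ∈ J, φ (rankE n v' i) = ∑ i ∈ J, φ (f i) :=
          Finset.sum_congr rfl (fun i hi => by rw [hJrank i hi])
      _ = ∑ q ∈ J.image f, φ q := (Finset.sum_image hinj).symm
      _ = ∑ q ∈ Finset.Icc 1 l, φ q := by rw [him]
  -- values of ranks for i outside J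
  have houtval : ∀ i ∈ T \ J,
      rankE n v' i = rk i + l + (sOut.idxOf (rk i) + 1) - (s.idxOf (rk i) + 1) := by
    intro i hi
    rcases mem_sdiff.1 hi with ⟨hiT, hiJ⟩
    have hv'i : v' i = v i := if_neg hiJ
    have hrR : rk i ∈ R := mem_image_of_mem rk hiT
    have hrROut : rk i ∈ ROut := mem_image_of_mem rk hi
    -- rank with v' splits
    have h1 : (univ.filter fun j => v' j < v' i)
        = J ∪ (univ.filter fun j => j ∉ J ∧ v j < v i) := by
      rw [hv'i]
      ext j
      by_cases hj : j ∈ J <;> simp [hv', hv, hj, EReal.bot_lt_coe]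
    have h2 : (univ.filter fun j => v' j = v' i ∧ j ≤ i)
        = univ.filter fun j => j ∉ J ∧ (v j = v i ∧ j ≤ i) := by
      rw [hv'i]
      ext j
      by_cases hj : j ∈ J <;> simp [hv', hv, hj, EReal.coe_ne_bot, and_assoc]
    have hd1 : Disjoint J (univ.filter fun j => j ∉ J ∧ v j < v i) := by
      rw [Finset.disjoint_left]
      intro a ha hb
      exact (mem_filter.1 hb).2.1 ha
    have hd2 : Disjoint (univ.filter fun j => j ∉ J ∧ v j < v i)
        (univ.filter fun j => j ∉ J ∧ (v j = v i ∧ j ≤ i)) := by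
      rw [Finset.disjoint_left]
      intro a ha hb
      exact absurd (mem_filter.1 hb).2.2.1 (ne_of_lt (mem_filter.1 ha).2.2)
    have hunion : (univ.filter fun j => j ∉ J ∧ v j < v i)
        ∪ (univ.filter fun j => j ∉ J ∧ (v j = v i ∧ j ≤ i))
        = univ.filter fun j => j ∉ J ∧ keyf v j ≤ keyf v i := by
      ext j
      simp only [mem_union, mem_filter, mem_univ, true_and, keyf, Prod.Lex.le_iff]
      tauto
    have hrank' : rankE n v' i
        = J.card + (univ.filter fun j => j ∉ J ∧ keyf v j ≤ keyf v i).card := by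
      rw [rankE, h1, h2, card_union_of_disjoint hd1, add_assoc,
        ← card_union_of_disjoint hd2, hunion]
    -- split the full count
    have hd3 : Disjoint (univ.filter fun j => j ∉ J ∧ keyf v j ≤ keyf v i)
        (univ.filter fun j => j ∈ J ∧ keyf v j ≤ keyf v i) := by
      rw [Finset.disjoint_left]
      intro a ha hb
      exact (mem_filter.1 ha).2.1 (mem_filter.1 hb).2.1
    have hsplit : (univ.filter fun j => keyf v j ≤ keyf v i)
        = (univ.filter fun j => j ∉ J ∧ keyf v j ≤ keyf v i)
          ∪ (univ.filter fun j => j ∈ J ∧ keyf v j ≤ keyf v i) := by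
      ext j
      simp only [mem_union, mem_filter, mem_univ, true_and]
      tauto
    have hJfilter : (univ.filter fun j => j ∈ J ∧ keyf v j ≤ keyf v i)
        = J.filter fun j => rk j ≤ rk i := by
      ext j
      simp only [mem_filter, mem_univ, true_and]
      rw [hrk, rankE_le_iff]
    have hfull : rk i = (univ.filter fun j => j ∉ J ∧ keyf v j ≤ keyf v i).card
        + (J.filter fun j => rk j ≤ rk i).card := by
      rw [← hJfilter, ← card_union_of_disjoint hd3, ← hsplit]
      exact rankE_eq_card v i
    -- counts via sorted lists
    have hTsplit : (T.filter fun j => rk j ≤ rk i).card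
        = ((T \ J).filter fun j => rk j ≤ rk i).card
          + (J.filter fun j => rk j ≤ rk i).card := by
      rw [← card_union_of_disjoint (disjoint_filter_filter sdiff_disjoint),
        ← filter_union, sdiff_union_of_subset hJT]
    have haT : (T.filter fun j => rk j ≤ rk i).card = s.idxOf (rk i) + 1 := by
      rw [hcount, ← hR, card_filter_le_eq R (rk i) hrR, ← hs]
    have hbOut : ((T \ J).filter fun j => rk j ≤ rk i).card = sOut.idxOf (rk i) + 1 := by
      rw [hcount, ← hROut, card_filter_le_eq ROut (rk i) hrROut, ← hsOut]
    have hcJle : (J.filter fun j => rk j ≤ rk i).card ≤ rk i := by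
      omega
    rw [hrank', hJcard]
    omega
  -- sum over T \ J
  have hnodupOut : sOut.Nodup := by rw [hsOut]; exact Finset.sort_nodup _ _
  have houtsum : ∑ i ∈ T \ J, φ (rankE n v' i)
      = ∑ p ∈ Finset.range (T.card - l),
          φ (sOut.getD p 0 + l + (p + 1) - (s.idxOf (sOut.getD p 0) + 1)) := by
    set g : ℕ → ℝ := fun r => φ (r + l + (sOut.idxOf r + 1) - (s.idxOf r + 1)) with hg
    have step1 : ∑ i ∈ T \ J, φ (rankE n v' i) = ∑ i ∈ T \ J, g (rk i) :=
      Finset.sum_congr rfl (fun i hi => by rw [houtval i hi, hg])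
    have step2 : ∑ i ∈ T \ J, g (rk i) = ∑ r ∈ ROut, g r :=
      (Finset.sum_image (fun a _ b _ h => hrkinj h)).symm
    have step3 : ∑ r ∈ ROut, g r = (sOut.map g).sum := by
      rw [← Finset.sum_map_toList]
      apply List.Perm.sum_eq
      rw [hsOut]
      exact ((Finset.sort_perm_toList ROut (· ≤ ·)).symm.map g)
    have step4 : (sOut.map g).sum = ∑ p ∈ Finset.range (T.card - l), g (sOut.getD p 0) := by
      rw [list_sum_range, hsOutlen]
    rw [step1, step2, step3, step4]
    apply Finset.sum_congr rfl
    intro p hp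
    have hplen : p < sOut.length := by rw [hsOutlen]; exact mem_range.1 hp
    rw [hg]
    simp only
    rw [indexOf_getD hnodupOut hplen]
  -- pointwise inequality
  have hpoint : ∀ p < T.card - l,
      s.getD p 0 + l ≤ sOut.getD p 0 + l + (p + 1) - (s.idxOf (sOut.getD p 0) + 1) := by
    intro p hp
    have hplen : p < sOut.length := by rw [hsOutlen]; exact hp
    have hmemOut : sOut.getD p 0 ∈ sOut := by
      rw [List.getD_eq_getElem sOut 0 hplen]
      exact List.getElem_mem hplen
    have hmemROut : sOut.getD p 0 ∈ ROut := by
      rw [← Finset.mem_sort (α := ℕ) (r := (· ≤ ·)), ← hsOut]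
      exact hmemOut
    have hmemR : sOut.getD p 0 ∈ R := hsub hmemROut
    have hmemS : sOut.getD p 0 ∈ s := by
      rw [hs]
      exact (Finset.mem_sort ..).2 hmemR
    set r := sOut.getD p 0 with hr
    have hjlen : s.idxOf r < s.length := List.idxOf_lt_length_iff.2 hmemS
    -- index in s is at least p
    have hidxge : p ≤ s.idxOf r := by
      have h1 : (R.filter (· ≤ r)).card = s.idxOf r + 1 := by
        rw [card_filter_le_eq R r hmemR, ← hs]
      have h2 : (ROut.filter (· ≤ r)).card = sOut.idxOf r + 1 := by
        rw [card_filter_le_eq ROut r hmemROut, ← hsOut]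
      have h3 : (ROut.filter (· ≤ r)).card ≤ (R.filter (· ≤ r)).card :=
        card_le_card (filter_subset_filter _ hsub)
      have h4 : sOut.idxOf r = p := indexOf_getD hnodupOut hplen
      omega
    have hssorted : s.Pairwise (· < ·) := by rw [hs]; exact (List.sortedLT_iff_pairwise.1 (Finset.sortedLT_sort _))
    have hgap := sorted_gap s hssorted (s.idxOf r - p) p (by omega)
    have hgetidx : s.getD (p + (s.idxOf r - p)) 0 = r := by
      have : p + (s.idxOf r - p) = s.idxOf r := by omega
      rw [this, List.getD_eq_getElem s 0 hjlen]
      exact List.getElem_idxOf hjlen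
    rw [hgetidx] at hgap
    omega
  -- assemble
  have heq : (∑ i ∈ T, φ (rankE n v' i))
      = (∑ q ∈ Finset.Icc 1 l, φ q)
        + ∑ p ∈ Finset.range (T.card - l),
            φ (sOut.getD p 0 + l + (p + 1) - (s.idxOf (sOut.getD p 0) + 1)) := by
    rw [← Finset.sum_sdiff hJT, hJsum, houtsum, add_comm]
  refine ⟨heq, hpoint, ?_⟩
  rw [heq]
  apply add_le_add_right
  apply Finset.sum_le_sum
  intro p hp
  exact hφ (hpoint p (mem_range.1 hp))
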